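/- arXiv:2511.09380 — 6 statements merged into one kernel-verified Lean document; each statement's English description precedes it below -/
import Mathlib

section
/- For positive integers m and n with n ≥ 2m-1, the set of Bott matrices of BS type from sequences in [n]^m equals the set of Bott matrices of BS type from sequences in [2m-1]^m; that is, B(n,m) = B(2m-1,m). -/
/-- The Bott matrix of BS type associated to a sequence `i`. -/
def bottMatrix (m : ℕ) (i : Fin m → ℤ) : Matrix (Fin m) (Fin m) ℤ :=
  fun j k =>
    if j = k then -1
    else if k < j then
      (if i j = i k then -2 else if |i j - i k| = 1 then 1 else 0)
    else 0

/-- The set `B(n,m)` of Bott matrices of BS type arising from sequences in `[n]^m`. -/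
def BSet (n m : ℕ) : Set (Matrix (Fin m) (Fin m) ℤ) :=
  {B | ∃ i : Fin m → ℤ, (∀ t, i t ∈ Finset.Icc (1 : ℤ) n) ∧ B = bottMatrix m i}

open Finset in
lemma bott_key (m : ℕ) (i : Fin m → ℤ) :
    ∃ i' : Fin m → ℤ, (∀ t, i' t ∈ Finset.Icc (1:ℤ) (2*(m:ℤ)-1)) ∧
      bottMatrix m i' = bottMatrix m i := by
  classical
  set s : Finset ℤ := Finset.image i Finset.univ with hs
  set φ : ℤ → ℤ := fun v =>
    ((s.filter (fun y => y ≤ v)).card : ℤ) +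
    ((s.filter (fun y => y < v ∧ y + 1 ∉ s)).card : ℤ) with hφ
  have hmem : ∀ t, i t ∈ s := fun t => mem_image.2 ⟨t, mem_univ t, rfl⟩
  have hcard : s.card ≤ m := by
    calc s.card ≤ (Finset.univ : Finset (Fin m)).card := card_image_le
    _ = m := by simp
  -- strict monotonicity
  have hA : ∀ v v', v ∈ s → v' ∈ s → v < v' → φ v < φ v' := by
    intro v v' hv hv' hlt
    have h1 : (s.filter (fun y => y ≤ v)).card < (s.filter (fun y => y ≤ v')).card := by
      apply card_lt_card
      constructor
      · intro y hy
        rw [mem_filter] at hy ⊢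
        exact ⟨hy.1, hy.2.trans hlt.le⟩
      · intro hcon
        have := hcon (mem_filter.2 ⟨hv', le_refl _⟩)
        rw [mem_filter] at this
        omega
    have h2 : (s.filter (fun y => y < v ∧ y + 1 ∉ s)).card ≤
        (s.filter (fun y => y < v' ∧ y + 1 ∉ s)).card := by
      apply card_le_card
      intro y hy
      rw [mem_filter] at hy ⊢
      exact ⟨hy.1, hy.2.1.trans hlt, hy.2.2⟩
    simp only [hφ]
    omega
  -- adjacent step
  have hB : ∀ v v', v ∈ s → v' ∈ s → v' = v + 1 → φ v' = φ v + 1 := by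
    intro v v' hv hv' heq
    have e1 : s.filter (fun y => y ≤ v') = insert v' (s.filter (fun y => y ≤ v)) := by
      ext y
      simp only [mem_filter, mem_insert]
      constructor
      · rintro ⟨hy, hle⟩
        by_cases hyv : y = v'
        · exact Or.inl hyv
        · exact Or.inr ⟨hy, by omega⟩
      · rintro (rfl | ⟨hy, hle⟩)
        · exact ⟨hv', le_refl _⟩
        · exact ⟨hy, by omega⟩
    have e2 : s.filter (fun y => y < v' ∧ y + 1 ∉ s) =
        s.filter (fun y => y < v ∧ y + 1 ∉ s) := by
      ext y
      simp only [mem_filter]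
      constructor
      · rintro ⟨hy, hlt, hns⟩
        refine ⟨hy, ?_, hns⟩
        by_contra hcon
        have : y = v := by omega
        subst this
        exact hns (heq ▸ hv')
      · rintro ⟨hy, hlt, hns⟩
        exact ⟨hy, by omega, hns⟩
    have hnm : v' ∉ s.filter (fun y => y ≤ v) := by
      rw [mem_filter]; omega
    simp only [hφ, e1, e2, card_insert_of_notMem hnm]
    push_cast
    ring
  -- gap at least 2
  have hC : ∀ v v', v ∈ s → v' ∈ s → v + 1 < v' → φ v + 2 ≤ φ v' := by
    intro v v' hv hv' hlt
    by_cases hvs : v + 1 ∈ s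
    · have hsub : insert (v+1) (insert v' (s.filter (fun y => y ≤ v))) ⊆
          s.filter (fun y => y ≤ v') := by
        intro y hy
        rw [mem_insert, mem_insert] at hy
        rw [mem_filter]
        rcases hy with rfl | rfl | hy
        · exact ⟨hvs, by omega⟩
        · exact ⟨hv', le_refl _⟩
        · rw [mem_filter] at hy
          exact ⟨hy.1, by omega⟩
      have h1 : (s.filter (fun y => y ≤ v)).card + 2 ≤ (s.filter (fun y => y ≤ v')).card := by
        have hc := card_le_card hsub
        rw [card_insert_of_notMem, card_insert_of_notMem] at hc
        · omega
        · rw [mem_filter]; omega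
        · rw [mem_insert, mem_filter]; omega
      have h2 : (s.filter (fun y => y < v ∧ y + 1 ∉ s)).card ≤
          (s.filter (fun y => y < v' ∧ y + 1 ∉ s)).card := by
        apply card_le_card
        intro y hy
        rw [mem_filter] at hy ⊢
        exact ⟨hy.1, by omega, hy.2.2⟩
      simp only [hφ]; omega
    · have h1 : (s.filter (fun y => y ≤ v)).card + 1 ≤ (s.filter (fun y => y ≤ v')).card := by
        have hsub : insert v' (s.filter (fun y => y ≤ v)) ⊆ s.filter (fun y => y ≤ v') := by
          intro y hy
          rw [mem_insert] at hy
          rw [mem_filter]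
          rcases hy with rfl | hy
          · exact ⟨hv', le_refl _⟩
          · rw [mem_filter] at hy
            exact ⟨hy.1, by omega⟩
        have hc := card_le_card hsub
        rw [card_insert_of_notMem] at hc
        · omega
        · rw [mem_filter]; omega
      have h2 : (s.filter (fun y => y < v ∧ y + 1 ∉ s)).card + 1 ≤
          (s.filter (fun y => y < v' ∧ y + 1 ∉ s)).card := by
        have hsub : insert v (s.filter (fun y => y < v ∧ y + 1 ∉ s)) ⊆
            s.filter (fun y => y < v' ∧ y + 1 ∉ s) := by
          intro y hy
          rw [mem_insert] at hy
          rw [mem_filter]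
          rcases hy with rfl | hy
          · exact ⟨hv, by omega, hvs⟩
          · rw [mem_filter] at hy
            exact ⟨hy.1, by omega, hy.2.2⟩
        have hc := card_le_card hsub
        rw [card_insert_of_notMem] at hc
        · omega
        · rw [mem_filter]; omega
      simp only [hφ]; omega
  -- bounds
  have hbound : ∀ v, v ∈ s → 1 ≤ φ v ∧ φ v ≤ 2*(m:ℤ) - 1 := by
    intro v hv
    have h1 : 1 ≤ (s.filter (fun y => y ≤ v)).card := by
      rw [Nat.one_le_iff_ne_zero, ← Nat.pos_iff_ne_zero, card_pos]
      exact ⟨v, mem_filter.2 ⟨hv, le_refl _⟩⟩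
    have h2 : (s.filter (fun y => y ≤ v)).card ≤ s.card := card_filter_le _ _
    have h3 : (s.filter (fun y => y < v ∧ y + 1 ∉ s)).card ≤ s.card - 1 := by
      have hsub : s.filter (fun y => y < v ∧ y + 1 ∉ s) ⊆ s.erase v := by
        intro y hy
        rw [mem_filter] at hy
        rw [mem_erase]
        exact ⟨by omega, hy.1⟩
      have := card_le_card hsub
      rw [card_erase_of_mem hv] at this
      exact this
    have h4 : 1 ≤ s.card := by
      rw [Nat.one_le_iff_ne_zero, ← Nat.pos_iff_ne_zero, card_pos]
      exact ⟨v, hv⟩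
    simp only [hφ]
    omega
  -- injectivity on s
  have hinj : ∀ v v', v ∈ s → v' ∈ s → φ v = φ v' → v = v' := by
    intro v v' hv hv' heq
    rcases lt_trichotomy v v' with hlt | rfl | hlt
    · exact absurd heq (hA v v' hv hv' hlt).ne
    · rfl
    · exact absurd heq.symm (hA v' v hv' hv hlt).ne
  -- adjacency preserved (ordered version)
  have hadj' : ∀ v v', v ∈ s → v' ∈ s → v < v' → (|φ v - φ v'| = 1 ↔ |v - v'| = 1) := by
    intro v v' hv hv' hlt
    have h1 := hA v v' hv hv' hlt
    rw [abs_eq (by norm_num : (0:ℤ) ≤ 1), abs_eq (by norm_num : (0:ℤ) ≤ 1)]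
    by_cases h2 : v' = v + 1
    · have := hB v v' hv hv' h2
      omega
    · have h3 : v + 1 < v' := by omega
      have := hC v v' hv hv' h3
      omega
  have hadj : ∀ v v', v ∈ s → v' ∈ s → (|φ v - φ v'| = 1 ↔ |v - v'| = 1) := by
    intro v v' hv hv'
    rcases lt_trichotomy v v' with hlt | rfl | hlt
    · exact hadj' v v' hv hv' hlt
    · simp
    · rw [abs_sub_comm (φ v), abs_sub_comm v]
      exact hadj' v' v hv' hv hlt
  refine ⟨fun t => φ (i t), fun t => ?_, ?_⟩
  · rw [Finset.mem_Icc]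
    exact hbound (i t) (hmem t)
  · ext j k
    simp only [bottMatrix]
    rcases eq_or_ne j k with rfl | hjk
    · simp
    simp only [if_neg hjk]
    by_cases hkj : k < j
    · simp only [if_pos hkj]
      have he : (φ (i j) = φ (i k)) ↔ (i j = i k) :=
        ⟨hinj _ _ (hmem j) (hmem k), fun h => by rw [h]⟩
      have ha := hadj (i j) (i k) (hmem j) (hmem k)
      exact if_congr he rfl (if_congr ha rfl rfl)
    · simp [hkj]

/-- for `n ≥ 2m - 1`, `B(n,m) = B(2m-1,m)`. -/
theorem BSet_stabilizes (n m : ℕ) (hm : 0 < m) (hn : 0 < n)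
    (h : 2 * m - 1 ≤ n) :
    BSet n m = BSet (2 * m - 1) m := by
  have hc : ((2*m-1 : ℕ) : ℤ) = 2*(m:ℤ) - 1 := by omega
  ext B
  simp only [BSet, Set.mem_setOf_eq]
  constructor
  · rintro ⟨i, hi, rfl⟩
    obtain ⟨i', hi', hEq⟩ := bott_key m i
    refine ⟨i', fun t => ?_, hEq.symm⟩
    have := hi' t
    rw [Finset.mem_Icc] at this ⊢
    omega
  · rintro ⟨i, hi, rfl⟩
    refine ⟨i, fun t => ?_, rfl⟩
    have := hi t
    have hle : ((2*m-1 : ℕ) : ℤ) ≤ (n : ℤ) := by exact_mod_cast h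
    rw [Finset.mem_Icc] at this ⊢
    omega
end

section
/- Let B be an m×m lower triangular integer matrix with all diagonal entries equal to -1, let J_B = {j ∈ [m] : there exists k < j with B_{j,k} ≠ 0}, and let I ⊆ [m] with J_B ⊆ I. Define L_I as the matrix whose j-th column is the standard basis vector e_j if j ∈ I and the j-th column of B if j ∉ I. Then L_I² is the identity matrix. -/
/-- For a matrix `B` and a set `I` of column indices, `LI B I` is the matrix whose
`j`-th column is the standard basis vector `e_j` if `j ∈ I`, and the `j`-th column
of `B` otherwise. -/
def LI (m : ℕ) (B : Matrix (Fin m) (Fin m) ℤ) (I : Finset (Fin m)) :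
    Matrix (Fin m) (Fin m) ℤ :=
  fun j k => if k ∈ I then (if j = k then 1 else 0) else B j k

/-- if `B` is lower triangular with diagonal entries `-1` and
`J_B ⊆ I`, then `L_I² = 1`. -/
theorem LI_sq_eq_one (m : ℕ) (B : Matrix (Fin m) (Fin m) ℤ)
    (hlower : ∀ j k : Fin m, j < k → B j k = 0)
    (hdiag : ∀ j, B j j = -1)
    (I : Finset (Fin m))
    (hJ : ∀ j : Fin m, (∃ k, k < j ∧ B j k ≠ 0) → j ∈ I) :
    LI m B I * LI m B I = 1 := by
  -- key: if l ∉ I and l ≠ k then B l k = 0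
  have hBzero : ∀ l k : Fin m, l ∉ I → l ≠ k → B l k = 0 := by
    intro l k hl hlk
    rcases lt_trichotomy l k with h | h | h
    · exact hlower l k h
    · exact absurd h hlk
    · by_contra hne
      exact hl (hJ l ⟨k, h, hne⟩)
  ext j k
  simp only [Matrix.mul_apply, Matrix.one_apply, LI]
  by_cases hk : k ∈ I
  · simp only [hk, if_true]
    rw [Finset.sum_eq_single k]
    · simp [hk]
    · intro l _ hlk
      simp [hlk, hk]
    · simp
  · simp only [hk, if_false]
    have key : ∀ l : Fin m,
        (if l ∈ I then (if j = l then (1:ℤ) else 0) else B j l) * B l k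
        = (if l = k then -(B j k) else 0) + (if l = j ∧ j ≠ k then B j k else 0) := by
      intro l
      by_cases hlk : l = k
      · subst hlk
        simp only [hk, if_false, if_true, hdiag]
        have : ¬ (l = j ∧ j ≠ l) := by tauto
        rw [if_neg this]
        ring
      · rw [if_neg hlk]
        by_cases hlI : l ∈ I
        · rw [if_pos hlI]
          by_cases hjl : j = l
          · subst hjl
            have : (j = j ∧ j ≠ k) := ⟨rfl, fun h => hlk h⟩
            rw [if_pos rfl, if_pos this, one_mul, zero_add]
          · rw [if_neg hjl, if_neg (by tauto), zero_add, zero_mul]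
        · rw [if_neg hlI, hBzero l k hlI hlk, mul_zero]
          by_cases hlj : l = j
          · subst hlj
            by_cases hjk : l ≠ k
            · rw [if_pos ⟨rfl, hjk⟩, hBzero l k hlI hlk, zero_add]
            · tauto
          · rw [if_neg (by tauto), zero_add]
    rw [Finset.sum_congr rfl (fun l _ => key l), Finset.sum_add_distrib]
    have h2 : ∀ l : Fin m, (if l = j ∧ j ≠ k then B j k else 0)
        = if l = j then (if j ≠ k then B j k else 0) else 0 := by
      intro l; by_cases h : l = j <;> simp [h]
    rw [Finset.sum_congr rfl (fun l _ => h2 l), Finset.sum_ite_eq' Finset.univ k,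
      Finset.sum_ite_eq' Finset.univ j]
    by_cases hjk : j = k
    · subst hjk; simp [hdiag]
    · simp [hjk]
end

section
/- Let B be an m×m lower triangular integer matrix with all diagonal entries equal to -1, let J_B = {j ∈ [m] : there exists k < j with B_{j,k} ≠ 0}, and let I ⊆ [m] with J_B ⊆ I. Define L_I as the matrix whose j-th column is e_j if j ∈ I and the j-th column of B otherwise, and L_{I^c} analogously with I replaced by its complement. Then L_I⁻¹ · L_{I^c} = B. -/
/-- if `B` is a Bott matrix (lower triangular with diagonal `-1`)
and `J_B ⊆ I`, then `L_I⁻¹ * L_{Iᶜ} = B`. -/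
theorem LI_inv_mul_LIc (m : ℕ) (B : Matrix (Fin m) (Fin m) ℤ)
    (hlower : ∀ j k : Fin m, j < k → B j k = 0)
    (hdiag : ∀ j, B j j = -1)
    (I : Finset (Fin m))
    (hJ : ∀ j : Fin m, (∃ k, k < j ∧ B j k ≠ 0) → j ∈ I) :
    (LI m B I)⁻¹ * LI m B Iᶜ = B := by
  -- rows of B outside I are -e_j
  have hrow : ∀ j : Fin m, j ∉ I → ∀ k, B j k = if j = k then -1 else 0 := by
    intro j hj k
    rcases lt_trichotomy j k with h | h | h
    · rw [hlower j k h, if_neg h.ne]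
    · subst h; rw [hdiag, if_pos rfl]
    · by_cases hz : B j k = 0
      · rw [hz, if_neg h.ne']
      · exact absurd (hJ j ⟨k, h, hz⟩) hj
  -- (L_I - 1) * (B + 1) = 0
  have h0 : (LI m B I - 1) * (B + 1) = 0 := by
    ext j k
    rw [Matrix.mul_apply]
    apply Finset.sum_eq_zero
    intro l _
    by_cases hl : l ∈ I
    · have : (LI m B I - 1) j l = 0 := by
        simp [LI, hl, Matrix.one_apply]
      rw [this, zero_mul]
    · have : (B + 1) l k = 0 := by
        simp [hrow l hl k, Matrix.one_apply]
        split <;> simp_all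
      rw [this, mul_zero]
    
  have hstep : LI m B I * B = LI m B Iᶜ := by
    have h1 : LI m B I * B + LI m B I = B + 1 := by
      have := h0
      rw [sub_mul, one_mul, sub_eq_zero] at this
      rw [mul_add, mul_one] at this
      linear_combination (norm := abel) this
    have h2 : LI m B Iᶜ = B + 1 - LI m B I := by
      ext j k
      by_cases hk : k ∈ I <;>
        simp [LI, hk, Matrix.one_apply]
    rw [h2, ← h1]; abel
  -- invertibility of L_I
  have hdet : IsUnit (LI m B I).det := by
    have htri : (LI m B I).BlockTriangular OrderDual.toDual := by
      intro j k h
      have hjk : j < k := h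
      simp [LI, hjk.ne, hlower j k hjk]
    rw [Matrix.det_of_lowerTriangular _ htri]
    apply Finset.prod_induction _ IsUnit (fun a b => IsUnit.mul) isUnit_one
    intro i _
    by_cases hi : i ∈ I <;> simp [LI, hi, hdiag i]
  rw [← hstep, ← mul_assoc, Matrix.nonsing_inv_mul _ hdet, one_mul]
end

section
/- Let B = [b_{j,k}] be a Bott matrix of BS type (all subdiagonal entries in {-2,1,0}, diagonal entries -1), let J_B = {j : there exists k < j with b_{j,k} ≠ 0}, and suppose I ⊆ [m] does not contain J_B. Let p = min(J_B \ I) and q = min{k : b_{p,q} ≠ 0}. Then the (p,q)-entry of the matrix B_I = L_I⁻¹ L_{I^c} equals -b_{p,q}; in particular, B_I is not a Bott matrix of BS type since -b_{p,q} ∈ {2, -1}. -/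
/-- A Bott matrix of BS type: lower triangular, diagonal entries `-1`, and all
entries strictly below the diagonal in `{-2, 1, 0}`. -/
def IsBSType (m : ℕ) (B : Matrix (Fin m) (Fin m) ℤ) : Prop :=
  (∀ j k : Fin m, j < k → B j k = 0) ∧ (∀ j, B j j = -1) ∧
    (∀ j k : Fin m, k < j → B j k = -2 ∨ B j k = 1 ∨ B j k = 0)

/-- if `B` is of BS type, `J_B ⊄ I`, `p = min (J_B \ I)` and
`q = min {k : b_{p,k} ≠ 0}`, then the `(p,q)`-entry of `B_I = L_I⁻¹ L_{Iᶜ}`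
equals `-b_{p,q}`; in particular `B_I` is not of BS type. -/
theorem opOne_entry_neg (m : ℕ) (B : Matrix (Fin m) (Fin m) ℤ)
    (hBS : IsBSType m B)
    (I : Finset (Fin m)) (p q : Fin m)
    (hpJ : ∃ k, k < p ∧ B p k ≠ 0) (hpI : p ∉ I)
    (hpmin : ∀ j : Fin m, (∃ k, k < j ∧ B j k ≠ 0) → j ∉ I → p ≤ j)
    (hq : B p q ≠ 0) (hqmin : ∀ k : Fin m, B p k ≠ 0 → q ≤ k) :
    ((LI m B I)⁻¹ * LI m B Iᶜ) p q = -B p q ∧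
      ¬ IsBSType m ((LI m B I)⁻¹ * LI m B Iᶜ) := by
  obtain ⟨hlow, hdiag, hsub⟩ := hBS
  set A := LI m B I with hA
  set C := LI m B Iᶜ with hC
  obtain ⟨k0, hk0p, hk0⟩ := hpJ
  have hqp : q < p := lt_of_le_of_lt (hqmin k0 hk0) hk0p
  -- rows j < p with j ∉ I have B j k = 0 for all k ≠ j
  have hrowzero : ∀ j k : Fin m, j < p → j ∉ I → j ≠ k → B j k = 0 := by
    intro j k hjp hjI hjk
    rcases lt_trichotomy j k with h | h | h
    · exact hlow j k h
    · exact absurd h hjk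
    · by_contra hne
      exact absurd (hpmin j ⟨k, h, hne⟩ hjI) (not_le.mpr hjp)
  -- A is lower triangular
  have hAlow : ∀ i j : Fin m, i < j → A i j = 0 := by
    intro i j hij
    simp only [hA, LI]
    split
    · exact if_neg (ne_of_lt hij)
    · exact hlow i j hij
  -- det A is a unit
  have hdet : IsUnit A.det := by
    have hAd : A.det = ∏ i, A i i :=
      Matrix.det_of_lowerTriangular A (fun i j hij => hAlow i j hij)
    have hsq : ∀ i : Fin m, A i i * A i i = 1 := by
      intro i
      simp only [hA, LI]
      split
      · simp
      · rw [hdiag i]; ring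
    refine IsUnit.of_mul_eq_one (∏ i, A i i) ?_
    rw [hAd, ← Finset.prod_mul_distrib]
    simp [hsq]
  -- the candidate row vector
  set r : Fin m → ℤ := fun j => if j = p then -1 else if j ∉ I ∧ j < p then -B p j else 0
    with hr
  have hrp : r p = -1 := by simp [hr]
  have hrI : ∀ j, j ∈ I → r j = 0 := by
    intro j hj
    have : j ≠ p := fun h => hpI (h ▸ hj)
    simp [hr, this, hj]
  have hrlt : ∀ j, j ∉ I → j < p → r j = -B p j := by
    intro j hj hjp
    simp [hr, ne_of_lt hjp, hj, hjp]
  have hrgt : ∀ j, j ≠ p → ¬ j < p → r j = 0 := by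
    intro j h1 h2
    simp [hr, h1, h2]
  -- key computation: r ᵥ* A = Pi.single p 1
  have hkey : Matrix.vecMul r A = Pi.single p 1 := by
    funext k
    simp only [Matrix.vecMul, dotProduct]
    by_cases hkI : k ∈ I
    · have hkp : k ≠ p := fun h => hpI (h ▸ hkI)
      have : ∀ j : Fin m, r j * A j k = if j = k then r k else 0 := by
        intro j
        simp only [hA, LI, if_pos hkI]
        split
        · subst ‹j = k›; simp
        · simp
      rw [Finset.sum_congr rfl fun j _ => this j]
      rw [Finset.sum_ite_eq' Finset.univ k (fun _ => r k)]
      rw [hrI k hkI]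
      simp [Pi.single_apply, hkp]
    · have hAk : ∀ j, A j k = B j k := by intro j; simp [hA, LI, hkI]
      by_cases hkp : k = p
      · subst hkp
        rw [Finset.sum_eq_single k]
        · rw [hAk, hrp, hdiag]; simp [Pi.single_apply]
        · intro j _ hjk
          rw [hAk]
          rcases lt_or_gt_of_ne hjk with h | h
          · rw [hlow j k h]; ring
          · rw [hrgt j hjk (not_lt.mpr h.le)]; ring
        · intro h; exact absurd (Finset.mem_univ k) h
      · -- k ≠ p, k ∉ I
        have hzero : ∀ j : Fin m, j ≠ p → j ≠ k → r j * A j k = 0 := by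
          intro j hjp hjk
          by_cases hjc : j ∉ I ∧ j < p
          · rw [hAk, hrowzero j k hjc.2 hjc.1 hjk]; ring
          · rw [show r j = 0 by simp [hr, hjp, hjc]]; ring
        have hsub' : (∑ j, r j * A j k) = ∑ j ∈ ({p, k} : Finset (Fin m)), r j * A j k := by
          refine (Finset.sum_subset (Finset.subset_univ _) ?_).symm
          intro x _ hx
          simp only [Finset.mem_insert, Finset.mem_singleton, not_or] at hx
          exact hzero x hx.1 hx.2
        rw [hsub', Finset.sum_pair (fun h => hkp h.symm)]
        rw [hAk, hAk, hrp]
        have hpk : (Pi.single p 1 : Fin m → ℤ) k = 0 := by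
          simp [Pi.single_apply, hkp]
        rw [hpk]
        by_cases hklt : k < p
        · rw [hrlt k hkI hklt, hdiag k]; ring
        · have hplt : p < k := lt_of_le_of_ne (not_lt.mp hklt) (Ne.symm hkp)
          rw [hlow p k hplt, hrgt k hkp hklt]; ring
  -- hence r is row p of A⁻¹
  haveI : Invertible A := A.invertibleOfIsUnitDet hdet
  have hrowinv : A⁻¹ p = r := by
    have h1 : Matrix.vecMul (Matrix.vecMul r A) A⁻¹ = r := by
      rw [Matrix.vecMul_vecMul, A.mul_nonsing_inv hdet, Matrix.vecMul_one]
    rw [hkey, Matrix.single_vecMul] at h1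
    funext j
    have := congrFun h1 j
    simpa using this
  have hentry : (A⁻¹ * C) p q = -B p q := by
    have hrw : (A⁻¹ * C) p q = ∑ j, r j * C j q := by
      simp only [Matrix.mul_apply, hrowinv]
    rw [hrw]
    by_cases hqI : q ∈ I
    · have hCq : ∀ j, C j q = B j q := by
        intro j; simp [hC, LI, hqI]
      rw [Finset.sum_eq_single p]
      · rw [hCq, hrp]; ring
      · intro j _ hjp
        rw [hCq]
        by_cases hjc : j ∉ I ∧ j < p
        · have hjq : j ≠ q := fun h => hjc.1 (h ▸ hqI)
          rw [hrowzero j q hjc.2 hjc.1 hjq]; ring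
        · rw [show r j = 0 by simp [hr, hjp, hjc]]; ring
      · intro h; exact absurd (Finset.mem_univ p) h
    · have hqIc : q ∈ Iᶜ := Finset.mem_compl.mpr hqI
      have hCq : ∀ j, C j q = if j = q then 1 else 0 := by
        intro j; simp [hC, LI, hqIc]
      have hterm : ∀ j : Fin m, r j * C j q = if j = q then r q else 0 := by
        intro j
        rw [hCq]
        split
        · subst ‹j = q›; simp
        · simp
      rw [Finset.sum_congr rfl fun j _ => hterm j,
        Finset.sum_ite_eq' Finset.univ q (fun _ => r q)]
      simp [hrlt q hqI hqp]
  refine ⟨hentry, ?_⟩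
  rintro ⟨_, _, h3⟩
  have hBpq := hsub p q hqp
  have := h3 p q hqp
  rw [hentry] at this
  omega
end

section
/- For every sequence i ∈ [n]^m, F(α(i)) = B_i; that is, applying the map α from sequences to assemblies of ordered partitions, followed by the map F from assemblies to Bott matrices, yields the Bott matrix of BS type associated to i. Consequently, the map F from AOP(n,m) to B(n,m) is surjective. -/
/-- An ordered partition: a list of (nonempty, pairwise disjoint) finite sets. -/
abbrev OP := List (Finset ℕ)

/-- An assembly of ordered partitions: a list of ordered partitions. -/
abbrev Assembly := List OP

/-- The union of the blocks of an ordered partition. -/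
def Uop (op : OP) : Finset ℕ := op.foldr (· ∪ ·) ∅

/-- `σ` is an assembly of ordered partitions of `[m]` with bound `n`. -/
def IsAOP (n m : ℕ) (σ : Assembly) : Prop :=
  (∀ op ∈ σ, op ≠ [] ∧ ∀ b ∈ op, b.Nonempty) ∧
  σ.flatten.Pairwise (fun s t => Disjoint s t) ∧
  σ.flatten.foldr (· ∪ ·) ∅ = Finset.Icc 1 m ∧
  σ.Pairwise (fun o₁ o₂ => (Uop o₁).min < (Uop o₂).min) ∧
  (σ.map List.length).sum + (σ.length - 1) ≤ n

/-- `x` and `y` lie in a common block of some ordered partition of `σ`. -/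
def sameBlock (σ : Assembly) (x y : ℕ) : Prop :=
  ∃ op ∈ σ, ∃ b ∈ op, x ∈ b ∧ y ∈ b

/-- `x` and `y` lie in consecutive blocks of some ordered partition of `σ`. -/
def adjBlock (σ : Assembly) (x y : ℕ) : Prop :=
  ∃ op ∈ σ, ∃ t : ℕ, t + 1 < op.length ∧
    ((x ∈ op[t]! ∧ y ∈ op[t + 1]!) ∨ (y ∈ op[t]! ∧ x ∈ op[t + 1]!))

/-- `x` and `y` are neighbors in `σ`. -/
def Neighbor (σ : Assembly) (x y : ℕ) : Prop := sameBlock σ x y ∨ adjBlock σ x y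

open Classical in
/-- The Bott matrix `F(σ)` associated to an assembly `σ` of ordered partitions of `[m]`
(the element of `[m]` corresponding to the index `j : Fin m` is `j + 1`). -/
noncomputable def FMat (m : ℕ) (σ : Assembly) : Matrix (Fin m) (Fin m) ℤ :=
  fun j k =>
    if j = k then -1
    else if k < j then
      (if sameBlock σ ((j : ℕ) + 1) ((k : ℕ) + 1) then -2
       else if adjBlock σ ((j : ℕ) + 1) ((k : ℕ) + 1) then 1 else 0)
    else 0

/-- The set of indices (1-based) on which the sequence `i` takes the value `v`. -/
def fiberSet (m : ℕ) (i : Fin m → ℤ) (v : ℤ) : Finset ℕ :=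
  (Finset.univ.filter (fun k => i k = v)).image (fun k : Fin m => (k : ℕ) + 1)

/-- Group a sorted list of integers into maximal runs of consecutive integers. -/
def groupRuns : List ℤ → List (List ℤ)
  | [] => []
  | a :: rest =>
    match groupRuns rest with
    | [] => [[a]]
    | [] :: gs => [a] :: [] :: gs
    | (b :: g) :: gs =>
        if a + 1 = b then (a :: b :: g) :: gs else [a] :: (b :: g) :: gs

lemma gr_cons (a : ℤ) (L : List ℤ) : groupRuns (a :: L) =
    match groupRuns L with
    | [] => [[a]]
    | [] :: gs => [a] :: [] :: gs
    | (b :: g) :: gs =>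
        if a + 1 = b then (a :: b :: g) :: gs else [a] :: (b :: g) :: gs := by
  rw [groupRuns]


lemma gr_cons_head (a : ℤ) (L : List ℤ) : ∃ g gs, groupRuns (a :: L) = (a :: g) :: gs := by
  rw [gr_cons]
  rcases h : groupRuns L with _ | ⟨_ | ⟨b, g⟩, gs⟩
  · exact ⟨[], [], rfl⟩
  · exact ⟨[], _, rfl⟩
  · simp only
    split
    · exact ⟨b :: g, gs, rfl⟩
    · exact ⟨[], _, rfl⟩

lemma gr_flatten (L : List ℤ) : (groupRuns L).flatten = L := by
  induction L with
  | nil => rfl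
  | cons a rest ih =>
    rw [gr_cons]
    rcases h : groupRuns rest with _ | ⟨_ | ⟨b, g⟩, gs⟩ <;> rw [h] at ih <;> simp_all
    split <;> simp_all

lemma gr_ne_nil {L : List ℤ} : ∀ g ∈ groupRuns L, g ≠ [] := by
  induction L with
  | nil => simp [groupRuns]
  | cons a rest ih =>
    rw [gr_cons]
    rcases h : groupRuns rest with _ | ⟨_ | ⟨b, g⟩, gs⟩ <;> rw [h] at ih <;> simp_all
    split <;> simp_all

lemma gr_chain {L : List ℤ} : ∀ g ∈ groupRuns L, g.IsChain (fun a b => b = a + 1) := by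
  induction L with
  | nil => simp [groupRuns]
  | cons a rest ih =>
    rw [gr_cons]
    rcases h : groupRuns rest with _ | ⟨_ | ⟨b, g⟩, gs⟩ <;> rw [h] at ih <;> simp_all
    split <;> simp_all [List.isChain_cons_cons] <;> try omega

lemma gr_adj {L : List ℤ} (hs : L.Pairwise (· < ·)) {a : ℤ} (ha : a ∈ L) (hb : a + 1 ∈ L) :
    ∃ g ∈ groupRuns L, [a, a + 1] <:+: g := by
  induction L with
  | nil => simp at ha
  | cons c rest ih =>
    rcases List.mem_cons.mp ha with h1 | h1
    · -- a = c; then rest = (a+1) :: rest'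
      subst h1
      have hb' : a + 1 ∈ rest := by
        rcases List.mem_cons.mp hb with h | h
        · omega
        · exact h
      rcases rest with _ | ⟨d, rest'⟩
      · simp at hb'
      have hd : d = a + 1 := by
        rcases List.mem_cons.mp hb' with h | h
        · omega
        · have h2 := (List.pairwise_cons.mp (List.pairwise_cons.mp hs).2).1 _ h
          have h3 := (List.pairwise_cons.mp hs).1 d (by simp)
          omega
      subst hd
      obtain ⟨g, gs, hgg⟩ := gr_cons_head (a + 1) rest'
      refine ⟨a :: (a + 1) :: g, ?_, [], g, rfl⟩
      rw [gr_cons, hgg]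
      simp
    · -- a ∈ rest
      have hb' : a + 1 ∈ rest := by
        rcases List.mem_cons.mp hb with h | h
        · exfalso
          have := (List.pairwise_cons.mp hs).1 a h1
          omega
        · exact h
      obtain ⟨g, hg, hinf⟩ := ih (List.pairwise_cons.mp hs).2 h1 hb'
      rw [gr_cons]
      rcases h : groupRuns rest with _ | ⟨_ | ⟨b, g0⟩, gs⟩ <;> rw [h] at hg
      · simp at hg
      · exact absurd rfl (gr_ne_nil _ (h ▸ List.mem_cons_self))
      · simp only
        rcases List.mem_cons.mp hg with h2 | h2
        · subst h2
          split
          · exact ⟨c :: b :: g0, by simp, hinf.trans ⟨[c], [], by simp⟩⟩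
          · exact ⟨b :: g0, by simp, hinf⟩
        · split
          · exact ⟨g, by simp [h2], hinf⟩
          · exact ⟨g, by simp [h2], hinf⟩

lemma gr_bound : ∀ (rest : List ℤ) (a : ℤ), (a :: rest).Pairwise (· < ·) →
    ∃ z ∈ a :: rest, (((groupRuns (a :: rest)).map List.length).sum : ℤ) +
      (groupRuns (a :: rest)).length ≤ z - a + 2 := by
  intro rest
  induction rest with
  | nil =>
    intro a _
    refine ⟨a, by simp, ?_⟩
    rw [gr_cons]
    simp [groupRuns]
  | cons b rest' ih =>
    intro a hs
    obtain ⟨z, hz, hbd⟩ := ih b (List.pairwise_cons.mp hs).2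
    have hab : a < b := (List.pairwise_cons.mp hs).1 b (by simp)
    obtain ⟨g, gs, hgg⟩ := gr_cons_head b rest'
    refine ⟨z, by simp [hz], ?_⟩
    rw [hgg] at hbd
    rw [gr_cons, hgg]
    simp only
    split
    · rename_i hcond
      simp only [List.map_cons, List.sum_cons, List.length_cons] at hbd ⊢
      push_cast at hbd ⊢
      omega
    · rename_i hcond
      have hb2 : b - a ≥ 2 := by omega
      simp only [List.map_cons, List.sum_cons, List.length_cons] at hbd ⊢
      push_cast at hbd ⊢
      simp only [List.length_nil, Nat.cast_zero]
      omega
/-- The map `α` sending a sequence to its assembly of ordered partitions. -/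
def alpha (m : ℕ) (i : Fin m → ℤ) : Assembly :=
  (groupRuns ((Finset.image i Finset.univ).sort (· ≤ ·))).map
    (fun run => run.map (fiberSet m i))

/-- The equivalence `∼` on assemblies: same length, and each constituent ordered
partition agrees up to reversal. -/
def SimRel (σ τ : Assembly) : Prop :=
  List.Forall₂ (fun s t => t = s ∨ t = s.reverse) σ τ

section AlphaLemmas

variable {m : ℕ} {i : Fin m → ℤ}

/-- values list -/
noncomputable def vals (m : ℕ) (i : Fin m → ℤ) : List ℤ :=
  (Finset.image i Finset.univ).sort (· ≤ ·)

lemma mem_vals {v : ℤ} : v ∈ vals m i ↔ ∃ j : Fin m, i j = v := by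
  simp [vals, Finset.mem_sort, Finset.mem_image]

lemma vals_sorted : (vals m i).Pairwise (· < ·) := (Finset.sortedLT_sort _).pairwise

lemma vals_nodup : (vals m i).Nodup := Finset.sort_nodup _ _

lemma alpha_eq : alpha m i = (groupRuns (vals m i)).map (fun run => run.map (fiberSet m i)) := rfl

lemma mem_fiberSet {x : ℕ} {v : ℤ} : x ∈ fiberSet m i v ↔ ∃ j : Fin m, i j = v ∧ x = (j : ℕ) + 1 := by
  simp [fiberSet, Finset.mem_image, Finset.mem_filter, eq_comm, and_comm]

lemma succ_mem_fiberSet {j : Fin m} {v : ℤ} : (j : ℕ) + 1 ∈ fiberSet m i v ↔ i j = v := by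
  rw [mem_fiberSet]
  constructor
  · rintro ⟨j', hj', he⟩
    have : j' = j := Fin.val_injective (by omega)
    rwa [this] at hj'
  · exact fun h => ⟨j, h, rfl⟩

lemma sameBlock_alpha {j k : Fin m} :
    sameBlock (alpha m i) ((j : ℕ) + 1) ((k : ℕ) + 1) ↔ i j = i k := by
  constructor
  · rintro ⟨op, hop, b, hb, hx, hy⟩
    rw [alpha_eq, List.mem_map] at hop
    obtain ⟨g, hg, rfl⟩ := hop
    rw [List.mem_map] at hb
    obtain ⟨v, hv, rfl⟩ := hb
    rw [succ_mem_fiberSet] at hx hy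
    rw [hx, hy]
  · intro h
    have hv : i j ∈ vals m i := mem_vals.mpr ⟨j, rfl⟩
    rw [← gr_flatten (vals m i), List.mem_flatten] at hv
    obtain ⟨g, hg, hvg⟩ := hv
    exact ⟨g.map (fiberSet m i), by rw [alpha_eq]; exact List.mem_map_of_mem hg,
      fiberSet m i (i j), List.mem_map_of_mem hvg,
      succ_mem_fiberSet.mpr rfl, succ_mem_fiberSet.mpr h.symm⟩

lemma adjBlock_of {j k : Fin m} (h : i k = i j + 1) :
    adjBlock (alpha m i) ((j : ℕ) + 1) ((k : ℕ) + 1) := by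
  have ha : i j ∈ vals m i := mem_vals.mpr ⟨j, rfl⟩
  have hb : i j + 1 ∈ vals m i := mem_vals.mpr ⟨k, h⟩
  obtain ⟨g, hg, s, t, hst⟩ := gr_adj vals_sorted ha hb
  subst hst
  have hglen : (s ++ [i j, i j + 1] ++ t).length = s.length + 2 + t.length := by simp; omega
  have h1 : s.length < (s ++ [i j, i j + 1] ++ t).length := by omega
  have h2 : s.length + 1 < (s ++ [i j, i j + 1] ++ t).length := by omega
  have e1 : (s ++ [i j, i j + 1] ++ t)[s.length]'h1 = i j := by
    simp only [List.append_assoc]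
    rw [List.getElem_append_right (le_refl s.length)]
    simp
  have e2 : (s ++ [i j, i j + 1] ++ t)[s.length + 1]'h2 = i j + 1 := by
    simp only [List.append_assoc]
    rw [List.getElem_append_right (by omega : s.length ≤ s.length + 1)]
    simp
  refine ⟨(s ++ [i j, i j + 1] ++ t).map (fiberSet m i),
    by rw [alpha_eq]; exact List.mem_map_of_mem hg,
    s.length, by rw [List.length_map]; omega, Or.inl ⟨?_, ?_⟩⟩
  · rw [getElem!_pos ((s ++ [i j, i j + 1] ++ t).map (fiberSet m i)) s.length
      (by rw [List.length_map]; omega), List.getElem_map, e1, succ_mem_fiberSet]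
  · rw [getElem!_pos ((s ++ [i j, i j + 1] ++ t).map (fiberSet m i)) (s.length + 1)
      (by rw [List.length_map]; omega), List.getElem_map, e2, succ_mem_fiberSet]
    exact h

lemma adjBlock_symm {σ : Assembly} {x y : ℕ} (h : adjBlock σ x y) : adjBlock σ y x := by
  obtain ⟨op, hop, t, ht, hc⟩ := h
  exact ⟨op, hop, t, ht, hc.symm⟩

lemma adjBlock_alpha {j k : Fin m} :
    adjBlock (alpha m i) ((j : ℕ) + 1) ((k : ℕ) + 1) ↔ |i j - i k| = 1 := by
  constructor
  · rintro ⟨op, hop, t, ht, hc⟩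
    rw [alpha_eq, List.mem_map] at hop
    obtain ⟨g, hg, rfl⟩ := hop
    rw [List.length_map] at ht
    have h1 : t < g.length := by omega
    have hch : g.get ⟨t+1, by omega⟩ = g.get ⟨t, by omega⟩ + 1 :=
      List.isChain_iff_getElem.mp (gr_chain g hg) t (by omega)
    simp only [List.get_eq_getElem] at hch
    have e0 : (g.map (fiberSet m i))[t]! = fiberSet m i (g[t]'h1) := by
      rw [getElem!_pos (g.map (fiberSet m i)) t (by rw [List.length_map]; omega),
        List.getElem_map]
    have e1 : (g.map (fiberSet m i))[t+1]! = fiberSet m i (g[t+1]'ht) := by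
      rw [getElem!_pos (g.map (fiberSet m i)) (t+1) (by rw [List.length_map]; omega),
        List.getElem_map]
    simp only [e0, e1, succ_mem_fiberSet] at hc
    rcases hc with ⟨h2, h3⟩ | ⟨h2, h3⟩ <;> rw [h2, h3, hch] <;> simp
  · intro h
    rcases (abs_eq (by norm_num : (0:ℤ) ≤ 1)).mp h with h1 | h1
    · exact adjBlock_symm (adjBlock_of (by omega))
    · exact adjBlock_of (by omega)

end AlphaLemmas

section Final

variable {m : ℕ} {i : Fin m → ℤ}

lemma mem_foldr_union {l : List (Finset ℕ)} {x : ℕ} :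
    x ∈ l.foldr (· ∪ ·) ∅ ↔ ∃ s ∈ l, x ∈ s := by
  induction l with
  | nil => simp
  | cons a l ih => simp [ih]

lemma mem_Uop {op : OP} {x : ℕ} : x ∈ Uop op ↔ ∃ b ∈ op, x ∈ b := mem_foldr_union

lemma sameBlock_congr {σ τ : Assembly} (h : σ.Perm τ) {x y : ℕ} :
    sameBlock σ x y ↔ sameBlock τ x y := by
  unfold sameBlock
  constructor <;> rintro ⟨op, hop, rest⟩
  · exact ⟨op, h.mem_iff.mp hop, rest⟩
  · exact ⟨op, h.mem_iff.mpr hop, rest⟩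

lemma adjBlock_congr {σ τ : Assembly} (h : σ.Perm τ) {x y : ℕ} :
    adjBlock σ x y ↔ adjBlock τ x y := by
  unfold adjBlock
  constructor <;> rintro ⟨op, hop, rest⟩
  · exact ⟨op, h.mem_iff.mp hop, rest⟩
  · exact ⟨op, h.mem_iff.mpr hop, rest⟩

lemma FMat_eq (σ : Assembly) (i : Fin m → ℤ)
    (hs : ∀ j k : Fin m, sameBlock σ ((j : ℕ) + 1) ((k : ℕ) + 1) ↔ i j = i k)
    (ha : ∀ j k : Fin m, adjBlock σ ((j : ℕ) + 1) ((k : ℕ) + 1) ↔ |i j - i k| = 1) :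
    FMat m σ = bottMatrix m i := by
  funext j k
  unfold FMat bottMatrix
  by_cases h1 : j = k
  · simp [h1]
  · simp only [if_neg h1]
    by_cases h2 : k < j
    · simp only [if_pos h2]
      by_cases h3 : i j = i k
      · rw [if_pos ((hs j k).mpr h3), if_pos h3]
      · rw [if_neg (fun c => h3 ((hs j k).mp c)), if_neg h3]
        by_cases h4 : |i j - i k| = 1
        · rw [if_pos ((ha j k).mpr h4), if_pos h4]
        · rw [if_neg (fun c => h4 ((ha j k).mp c)), if_neg h4]
    · simp [h2]

lemma FMat_alpha (i : Fin m → ℤ) : FMat m (alpha m i) = bottMatrix m i :=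
  FMat_eq _ i (fun _ _ => sameBlock_alpha) (fun _ _ => adjBlock_alpha)

lemma fiberSet_disjoint {v w : ℤ} (h : v ≠ w) :
    Disjoint (fiberSet m i v) (fiberSet m i w) := by
  rw [Finset.disjoint_left]
  intro x hx hw
  obtain ⟨j, hj, rfl⟩ := mem_fiberSet.mp hx
  rw [succ_mem_fiberSet] at hw
  exact h (hj.symm.trans hw)

lemma alpha_flatten : (alpha m i).flatten = (vals m i).map (fiberSet m i) := by
  rw [alpha_eq, ← List.map_flatten, gr_flatten]

lemma alpha_blocks : ∀ op ∈ alpha m i, op ≠ [] ∧ ∀ b ∈ op, b.Nonempty := by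
  intro op hop
  rw [alpha_eq, List.mem_map] at hop
  obtain ⟨g, hg, rfl⟩ := hop
  refine ⟨by simpa using gr_ne_nil g hg, ?_⟩
  intro b hb
  rw [List.mem_map] at hb
  obtain ⟨v, hv, rfl⟩ := hb
  have hvv : v ∈ vals m i := by
    rw [← gr_flatten (vals m i)]
    exact List.mem_flatten.mpr ⟨g, hg, hv⟩
  obtain ⟨j, hj⟩ := mem_vals.mp hvv
  exact ⟨(j : ℕ) + 1, succ_mem_fiberSet.mpr hj⟩

lemma alpha_disjoint : (alpha m i).flatten.Pairwise (fun s t => Disjoint s t) := by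
  rw [alpha_flatten, List.pairwise_map]
  exact vals_nodup.imp (fun h => fiberSet_disjoint h)

lemma alpha_cover : (alpha m i).flatten.foldr (· ∪ ·) ∅ = Finset.Icc 1 m := by
  rw [alpha_flatten]
  ext x
  rw [mem_foldr_union]
  simp only [List.mem_map]
  constructor
  · rintro ⟨s, ⟨v, hv, rfl⟩, hx⟩
    obtain ⟨j, hj, rfl⟩ := mem_fiberSet.mp hx
    have := j.isLt
    simp only [Finset.mem_Icc]
    omega
  · intro hx
    rw [Finset.mem_Icc] at hx
    have hj : x - 1 < m := by omega
    refine ⟨fiberSet m i (i ⟨x - 1, hj⟩), ⟨i ⟨x - 1, hj⟩, mem_vals.mpr ⟨_, rfl⟩, rfl⟩, ?_⟩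
    rw [mem_fiberSet]
    exact ⟨⟨x - 1, hj⟩, rfl, by simp; omega⟩

end Final

/-- `F(α(i)) = B_i` for every `i ∈ [n]^m`; consequently the map
`F : AOP(n,m) → B(n,m)` is surjective. -/
theorem F_alpha_eq_bottMatrix (n m : ℕ) (hn : 0 < n) (hm : 0 < m) :
    (∀ i : Fin m → ℤ, (∀ t, i t ∈ Finset.Icc (1 : ℤ) n) →
      FMat m (alpha m i) = bottMatrix m i) ∧
    (∀ B ∈ BSet n m, ∃ σ : Assembly, IsAOP n m σ ∧ FMat m σ = B) := by
  constructor
  · exact fun i _ => FMat_alpha i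
  · rintro B ⟨i, hi, rfl⟩
    simp only [Finset.mem_Icc] at hi
    set le : OP → OP → Bool := fun o₁ o₂ => decide ((Uop o₁).min ≤ (Uop o₂).min) with hle
    set σ' : Assembly := (alpha m i).mergeSort le with hσ'
    have perm : σ'.Perm (alpha m i) := List.mergeSort_perm _ le
    haveI : LeftCommutative (fun (s t : Finset ℕ) => s ∪ t) :=
      ⟨fun a b c => by rw [Finset.union_left_comm]⟩
    -- blocks
    have hblocks : ∀ op ∈ σ', op ≠ [] ∧ ∀ b ∈ op, b.Nonempty :=
      fun op hop => alpha_blocks op (perm.mem_iff.mp hop)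
    -- flatten pairwise disjoint
    have hdisj : σ'.flatten.Pairwise (fun s t => Disjoint s t) :=
      ((perm.flatten).pairwise_iff (fun h => h.symm)).mpr alpha_disjoint
    -- cover
    have hcover : σ'.flatten.foldr (· ∪ ·) ∅ = Finset.Icc 1 m := by
      rw [(perm.flatten).foldr_eq ∅]
      exact alpha_cover
    -- min-ordering
    have hUne : ∀ op ∈ σ', (Uop op).Nonempty := by
      intro op hop
      obtain ⟨hne, hb⟩ := hblocks op hop
      rcases op with _ | ⟨b, op'⟩
      · exact absurd rfl hne
      · obtain ⟨x, hx⟩ := hb b (by simp)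
        exact ⟨x, mem_Uop.mpr ⟨b, by simp, hx⟩⟩
    have hUdisj : σ'.Pairwise (fun o₁ o₂ => Disjoint (Uop o₁) (Uop o₂)) := by
      refine ((List.pairwise_flatten.mp hdisj).2).imp ?_
      intro o₁ o₂ h
      rw [Finset.disjoint_left]
      intro x hx₁ hx₂
      obtain ⟨b₁, hb₁, hxb₁⟩ := mem_Uop.mp hx₁
      obtain ⟨b₂, hb₂, hxb₂⟩ := mem_Uop.mp hx₂
      exact Finset.disjoint_left.mp (h b₁ hb₁ b₂ hb₂) hxb₁ hxb₂
    have hsorted : σ'.Pairwise (fun o₁ o₂ => (Uop o₁).min ≤ (Uop o₂).min) := by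
      have := List.pairwise_mergeSort (le := le)
        (fun a b c hab hbc => by
          simp only [hle, decide_eq_true_eq] at *; exact le_trans hab hbc)
        (fun a b => by simp only [hle, Bool.or_eq_true, decide_eq_true_eq]; exact le_total _ _)
        (alpha m i)
      exact this.imp (fun h => by simpa [hle] using h)
    have hmin : σ'.Pairwise (fun o₁ o₂ => (Uop o₁).min < (Uop o₂).min) := by
      refine (hsorted.and hUdisj).imp_of_mem ?_
      rintro o₁ o₂ h₁ h₂ ⟨hle12, hd⟩
      have ne₁ := hUne o₁ h₁
      have ne₂ := hUne o₂ h₂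
      rw [← Finset.coe_min' ne₁, ← Finset.coe_min' ne₂] at hle12 ⊢
      rw [WithTop.coe_le_coe] at hle12
      rw [WithTop.coe_lt_coe]
      refine lt_of_le_of_ne hle12 (fun hc => ?_)
      exact Finset.disjoint_left.mp hd (Finset.min'_mem _ ne₁)
        (hc ▸ Finset.min'_mem _ ne₂)
    -- bound
    have hbound : (σ'.map List.length).sum + (σ'.length - 1) ≤ n := by
      have e1 : (σ'.map List.length).sum = ((groupRuns (vals m i)).map List.length).sum := by
        rw [(perm.map List.length).sum_eq, alpha_eq, List.map_map]
        simp [Function.comp_def]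
      have e2 : σ'.length = (groupRuns (vals m i)).length := by
        rw [perm.length_eq, alpha_eq, List.length_map]
      rcases hv : vals m i with _ | ⟨a, rest⟩
      · exfalso
        have hmem : i ⟨0, hm⟩ ∈ vals m i := mem_vals.mpr ⟨_, rfl⟩
        rw [hv] at hmem
        simp at hmem
      obtain ⟨z, hz, hbd⟩ := gr_bound rest a (hv ▸ vals_sorted)
      have ha1 : 1 ≤ a := by
        obtain ⟨j, hj⟩ := mem_vals.mp (hv ▸ List.mem_cons_self (a := a) (l := rest))
        have := (hi j).1
        omega
      have hzn : z ≤ (n : ℤ) := by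
        obtain ⟨j, hj⟩ := mem_vals.mp (hv ▸ hz)
        have := (hi j).2
        omega
      obtain ⟨g, gs, hgg⟩ := gr_cons_head a rest
      have hlen1 : 1 ≤ (groupRuns (a :: rest)).length := by rw [hgg]; simp
      have key : ((groupRuns (a :: rest)).map List.length).sum +
          (groupRuns (a :: rest)).length ≤ n + 1 := by
        have hZ : ((((groupRuns (a :: rest)).map List.length).sum : ℕ) : ℤ) +
            (((groupRuns (a :: rest)).length : ℕ) : ℤ) ≤ (n : ℤ) + 1 := by omega
        exact_mod_cast hZ
      rw [e1, e2, hv]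
      omega
    exact ⟨σ', ⟨hblocks, hdisj, hcover, hmin, hbound⟩,
      (FMat_eq σ' i
        (fun j k => (sameBlock_congr perm).trans sameBlock_alpha)
        (fun j k => (adjBlock_congr perm).trans adjBlock_alpha))⟩
end

section
/- b(2,m) = 2^{m-1} for all m ≥ 1, where b(n,m) is the number of distinct Bott matrices of BS type arising from sequences in [n]^m. -/
/-- `b(2,m) = 2^(m-1)` for all `m ≥ 1`. -/
theorem card_BSet_two (m : ℕ) (hm : 1 ≤ m) :
    (BSet 2 m).ncard = 2 ^ (m - 1) := by
  set z : Fin m := ⟨0, hm⟩ with hz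
  set S : Set (Fin m → Bool) := {v | v z = false} with hS
  set M : (Fin m → Bool) → Matrix (Fin m) (Fin m) ℤ :=
    fun v => bottMatrix m (fun t => if v t then 2 else 1) with hM
  have hrange : BSet 2 m = M '' S := by
    ext B
    constructor
    · rintro ⟨i, hi, rfl⟩
      refine ⟨fun t => if i t = i z then false else true, by simp [hS], ?_⟩
      simp only [hM]
      funext j k
      have hj := Finset.mem_Icc.mp (hi j)
      have hk := Finset.mem_Icc.mp (hi k)
      have hzz := Finset.mem_Icc.mp (hi z)
      have aj : i j = 1 ∨ i j = 2 := by omega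
      have ak : i k = 1 ∨ i k = 2 := by omega
      have az : i z = 1 ∨ i z = 2 := by omega
      simp only [bottMatrix]
      rcases aj with aj | aj <;> rcases ak with ak | ak <;> rcases az with az | az <;>
        norm_num [aj, ak, az]
    · rintro ⟨v, hv, rfl⟩
      refine ⟨fun t => if v t then 2 else 1, fun t => ?_, rfl⟩
      rw [Finset.mem_Icc]
      by_cases hvt : v t = true <;> simp [hvt]
  have hinj : Set.InjOn M S := by
    intro v hv w hw h
    simp only [hS, Set.mem_setOf_eq] at hv hw
    funext t
    by_cases ht : t = z
    · rw [ht, hv, hw]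
    · have hzt : z < t := by
        have h1 : t.val ≠ z.val := fun e => ht (Fin.ext e)
        have h2 : z.val = 0 := rfl
        rw [Fin.lt_def]
        omega
      have hte : ¬ (t = z) := ht
      have key := congrFun (congrFun h t) z
      simp only [hM, bottMatrix, hte, hzt, if_false, if_true, hv, hw] at key
      cases hvt : v t <;> cases hwt : w t <;>
        simp only [hvt, hwt, if_true, if_false] at key ⊢ <;> norm_num at key
  rw [hrange, Set.ncard_image_of_injOn hinj]
  have e : S ≃ ({t : Fin m // t ≠ z} → Bool) :=
    { toFun := fun v t => v.1 t.1
      invFun := fun g => ⟨fun t => if h : t = z then false else g ⟨t, h⟩, by simp [hS]⟩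
      left_inv := fun ⟨v, hv⟩ => by
        simp only [hS, Set.mem_setOf_eq] at hv
        refine Subtype.ext (funext fun t => ?_)
        by_cases h : t = z
        · simp [h, hv]
        · simp [h]
      right_inv := fun g => funext fun t => by simp [t.2] }
  have : S.ncard = Nat.card S := rfl
  rw [this, Nat.card_congr e, Nat.card_eq_fintype_card, Fintype.card_fun,
    Fintype.card_bool, Fintype.card_subtype_compl, Fintype.card_subtype_eq,
    Fintype.card_fin]
end
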